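/- Let −∞ < t₁ < t₂ < ∞ and let Q : [t₁,t₂] → M₃(ℝ) be continuous with Q(t) ∈ 𝒬 for every t. Then there exist exactly two continuous maps n⁺, n⁻ : [t₁,t₂] → 𝕊² with Q(t) = P(n⁺(t)) = P(n⁻(t)) for all t, and they satisfy n⁻ = −n⁺. Equivalently: given either of the two unit vectors n̄ ∈ 𝕊² with Q(t₁) = P(n̄), there exists a unique continuous map n : [t₁,t₂] → 𝕊² with n(t₁) = n̄ and Q(t) = P(n(t)) for all t ∈ [t₁,t₂]. -/

import Mathlib

open Matrix

/-- `P(n) = s (n⊗n − (1/3) Id)`. -/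
noncomputable def Pmat (s : ℝ) (n : Fin 3 → ℝ) : Matrix (Fin 3) (Fin 3) ℝ :=
  s • (Matrix.vecMulVec n n - (1 / 3 : ℝ) • (1 : Matrix (Fin 3) (Fin 3) ℝ))

local notation "E3" => EuclideanSpace ℝ (Fin 3)

lemma pmat_entry (s : ℝ) (v : Fin 3 → ℝ) (i j : Fin 3) :
    Pmat s v i j = s * (v i * v j - (1/3) * (if i = j then 1 else 0)) := by
  simp [Pmat, Matrix.vecMulVec_apply, Matrix.one_apply, Matrix.sub_apply, Matrix.smul_apply]

lemma pmat_mul_eq {s : ℝ} (hs : s ≠ 0) {v w : Fin 3 → ℝ}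
    (h : Pmat s v = Pmat s w) (i j : Fin 3) : v i * v j = w i * w j := by
  have h2 := congrFun (congrFun h i) j
  rw [pmat_entry, pmat_entry] at h2
  have := mul_left_cancel₀ hs h2
  linarith

lemma sum_sq_eq_one {m : E3} (hm : ‖m‖ = 1) : ∑ i, m i * m i = 1 := by
  have h : (inner ℝ m m : ℝ) = ∑ i, m i * m i := by
    simp only [PiLp.inner_apply, RCLike.inner_apply, conj_trivial, mul_comm]
  rw [← h, real_inner_self_eq_norm_sq, hm]; norm_num

lemma eq_or_neg {s : ℝ} (hs : s ≠ 0) {m n : E3} (hm : ‖m‖ = 1)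
    (h : Pmat s (fun i => m i) = Pmat s (fun i => n i)) : n = m ∨ n = -m := by
  have key : ∀ i j, m i * m j = n i * n j := pmat_mul_eq hs h
  have hsum := sum_sq_eq_one hm
  have hex : ∃ i, m i ≠ 0 := by
    by_contra hc
    push_neg at hc
    rw [Finset.sum_eq_zero (fun i _ => by rw [hc i]; ring)] at hsum
    norm_num at hsum
  obtain ⟨i, hi⟩ := hex
  have hni : n i ≠ 0 := by
    intro h0
    have := key i i
    rw [h0] at this
    simp at this
    exact hi this
  set c := n i / m i with hc
  have hcc : c * c = 1 := by
    rw [hc, div_mul_div_comm, div_eq_one_iff_eq (mul_ne_zero hi hi)]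
    linarith [key i i]
  have hval : ∀ j, n j = c * m j := by
    intro j
    have hj := key j i
    rw [hc, div_mul_eq_mul_div, eq_div_iff hi]
    apply mul_right_cancel₀ hni
    linear_combination (-(m i)) * hj + m j * key i i
  rcases mul_self_eq_one_iff.mp hcc with h1 | h1
  · left; exact PiLp.ext fun j => by rw [hval j, h1, one_mul]
  · right; exact PiLp.ext fun j => by
      rw [hval j, h1]
      show -1 * m j = -(m j)
      ring

lemma pmat_sign (s : ℝ) (m : E3) {c : ℝ} (hc : c = 1 ∨ c = -1) :
    Pmat s (fun i => (c • m) i) = Pmat s (fun i => m i) := by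
  have hcc : c * c = 1 := by rcases hc with h | h <;> rw [h] <;> ring
  ext i j
  rw [pmat_entry, pmat_entry]
  have : (c • m) i * (c • m) j = (c * c) * (m i * m j) := by
    show (c * m i) * (c * m j) = _
    ring
  rw [this, hcc, one_mul]

noncomputable def toE (v : Fin 3 → ℝ) : E3 := (WithLp.equiv 2 (Fin 3 → ℝ)).symm v

lemma toE_continuous : Continuous toE := PiLp.continuous_toLp 2 (fun _ : Fin 3 => ℝ)

lemma fvec_eq {s : ℝ} (hs : s ≠ 0) (m n₀ : E3) :
    toE (s⁻¹ • ((Pmat s (fun i => m i)) *ᵥ (fun i => n₀ i)) + (3:ℝ)⁻¹ • (fun i => n₀ i))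
      = (inner ℝ m n₀ : ℝ) • m := by
  apply PiLp.ext
  intro i
  show s⁻¹ * ((Pmat s (fun i => m i)) *ᵥ (fun i => n₀ i)) i + (3:ℝ)⁻¹ * n₀ i
      = (inner ℝ m n₀ : ℝ) * m i
  have hmv : ((Pmat s (fun i => m i)) *ᵥ (fun i => n₀ i)) i
      = s * ((∑ j, m j * n₀ j) * m i - (3:ℝ)⁻¹ * n₀ i) := by
    simp only [Matrix.mulVec, dotProduct, pmat_entry]
    rw [Finset.sum_congr rfl (fun j _ => by ring_nf :
      ∀ j ∈ Finset.univ, s * (m i * m j - 1/3 * (if i = j then 1 else 0)) * n₀ j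
        = s * (m i * (m j * n₀ j)) - s * (1/3) * ((if i = j then (1:ℝ) else 0) * n₀ j))]
    have hite : ∑ j, (if i = j then (1:ℝ) else 0) * n₀ j = n₀ i := by
      simp [Finset.sum_ite_eq]
    have h2 : ∑ x, s * (1/3) * ((if i = x then (1:ℝ) else 0) * n₀ x) = s * (1/3) * n₀ i := by
      rw [← Finset.mul_sum, hite]
    rw [Finset.sum_sub_distrib, ← Finset.mul_sum, h2, ← Finset.mul_sum]
    ring
  rw [hmv]
  have hin : (inner ℝ m n₀ : ℝ) = ∑ j, m j * n₀ j := by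
    simp only [PiLp.inner_apply, RCLike.inner_apply, conj_trivial, mul_comm]
  rw [hin]
  field_simp
  ring

/-- Existence of a continuous lifting with prescribed initial value. -/
lemma exists_lift (s : ℝ) (hs : s ≠ 0) (t₁ t₂ : ℝ) (ht : t₁ < t₂)
    (Q : Set.Icc t₁ t₂ → Matrix (Fin 3) (Fin 3) ℝ) (hQc : Continuous Q)
    (hQval : ∀ t, ∃ m : E3, ‖m‖ = 1 ∧ Q t = Pmat s (fun i => m i))
    (nbar : E3) (hnbar : ‖nbar‖ = 1)
    (hstart : Q ⟨t₁, Set.left_mem_Icc.mpr ht.le⟩ = Pmat s (fun i => nbar i)) :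
    ∃ n : Set.Icc t₁ t₂ → E3, Continuous n ∧ n ⟨t₁, Set.left_mem_Icc.mpr ht.le⟩ = nbar ∧
      ∀ t, ‖n t‖ = 1 ∧ Q t = Pmat s (fun i => n t i) := by
  set bot : Set.Icc t₁ t₂ := ⟨t₁, Set.left_mem_Icc.mpr ht.le⟩ with hbot
  set A : Set ℝ := {x | ∃ _ : x ∈ Set.Icc t₁ t₂, ∃ n : Set.Icc t₁ t₂ → E3,
    Continuous n ∧ n bot = nbar ∧
    ∀ t : Set.Icc t₁ t₂, (t : ℝ) ≤ x → (‖n t‖ = 1 ∧ Q t = Pmat s (fun i => n t i))} with hA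
  have hA1 : t₁ ∈ A := by
    refine ⟨Set.left_mem_Icc.mpr ht.le, fun _ => nbar, continuous_const, rfl, ?_⟩
    intro t htle
    have : t = bot := Subtype.ext (le_antisymm htle t.2.1)
    rw [this]
    exact ⟨hnbar, hstart⟩
  have hbdd : BddAbove A := ⟨t₂, fun x hx => hx.1.2⟩
  have hAne : A.Nonempty := ⟨t₁, hA1⟩
  -- the extension step
  have key : ∀ u : Set.Icc t₁ t₂,
      (∀ ε > (0:ℝ), ∃ x ∈ A, (u:ℝ) - ε < x ∧ x ≤ (u:ℝ)) →
      ∃ δ > (0:ℝ), min ((u:ℝ) + δ) t₂ ∈ A := by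
    intro u happrox
    obtain ⟨mu, hmu1, hmu2⟩ := hQval u
    set g : Set.Icc t₁ t₂ → E3 :=
      fun t => toE (s⁻¹ • (Q t *ᵥ fun i => mu i) + (3:ℝ)⁻¹ • fun i => mu i) with hg
    have hgc : Continuous g :=
      toE_continuous.comp
        (((hQc.matrix_mulVec continuous_const).const_smul s⁻¹).add continuous_const)
    have hgval : ∀ (t : Set.Icc t₁ t₂) (m : E3), Q t = Pmat s (fun i => m i) →
        g t = (inner ℝ m mu : ℝ) • m := by
      intro t m h2
      rw [hg]
      simp only
      rw [h2]
      exact fvec_eq hs m mu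
    have hgu : g u = mu := by
      rw [hgval u mu hmu2]
      have : (inner ℝ mu mu : ℝ) = 1 := by
        rw [real_inner_self_eq_norm_sq, hmu1]; norm_num
      rw [this, one_smul]
    -- local nonvanishing
    have hS : IsOpen {t : Set.Icc t₁ t₂ | g t ≠ 0} :=
      IsOpen.preimage hgc isOpen_ne
    have huS : u ∈ {t : Set.Icc t₁ t₂ | g t ≠ 0} := by
      show g u ≠ 0
      rw [hgu]
      intro h0
      rw [h0] at hmu1
      simp at hmu1
    obtain ⟨ε, hε, hball⟩ := Metric.isOpen_iff.mp hS u huS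
    have hball' : ∀ t : Set.Icc t₁ t₂, |(t:ℝ) - (u:ℝ)| < ε → g t ≠ 0 := by
      intro t hdist
      exact hball (by rwa [Metric.mem_ball, Subtype.dist_eq, Real.dist_eq])
    obtain ⟨u', hu'A, hu'1, hu'2⟩ := happrox (ε/2) (by positivity)
    obtain ⟨hu'mem, n, hnc, hn0, hngood⟩ := hu'A
    set u'' : Set.Icc t₁ t₂ := ⟨u', hu'mem⟩ with hu''
    set v : ℝ := min ((u:ℝ) + ε/2) t₂ with hv
    have hv_mem : v ∈ Set.Icc t₁ t₂ :=
      ⟨le_min (le_trans u.2.1 (by linarith)) (le_of_lt ht), min_le_right _ _⟩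
    have hu'v : u' ≤ v := le_min (by linarith) hu'mem.2
    -- clamping map
    have hclamp_mem : ∀ t : Set.Icc t₁ t₂, max u' (min (t:ℝ) v) ∈ Set.Icc t₁ t₂ := by
      intro t
      constructor
      · exact le_trans hu'mem.1 (le_max_left _ _)
      · exact max_le hu'mem.2 (le_trans (min_le_right _ _) hv_mem.2)
    set clamp : Set.Icc t₁ t₂ → Set.Icc t₁ t₂ :=
      fun t => ⟨max u' (min (t:ℝ) v), hclamp_mem t⟩ with hclamp
    have hclamp_cont : Continuous clamp :=
      Continuous.subtype_mk (continuous_const.max (continuous_subtype_val.min continuous_const)) _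
    have hclamp_ball : ∀ t : Set.Icc t₁ t₂, g (clamp t) ≠ 0 := by
      intro t
      apply hball'
      show |max u' (min (t:ℝ) v) - (u:ℝ)| < ε
      rw [abs_lt]
      constructor
      · have h1 : u' ≤ max u' (min (t:ℝ) v) := le_max_left _ _
        linarith
      · have h2 : max u' (min (t:ℝ) v) ≤ v :=
          max_le hu'v (min_le_right _ _)
        have h3 : v ≤ (u:ℝ) + ε/2 := min_le_left _ _
        linarith
    -- normalized section
    set F : Set.Icc t₁ t₂ → E3 := fun t => ‖g t‖⁻¹ • g t with hF
    have hFlift : ∀ t : Set.Icc t₁ t₂, g t ≠ 0 →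
        ∃ c : ℝ, (c = 1 ∨ c = -1) ∧ ∃ m : E3, ‖m‖ = 1 ∧ Q t = Pmat s (fun i => m i) ∧
          F t = c • m := by
      intro t hgt
      obtain ⟨m, hm1, hm2⟩ := hQval t
      have hgtm : g t = (inner ℝ m mu : ℝ) • m := hgval t m hm2
      set r : ℝ := (inner ℝ m mu : ℝ) with hr
      have hrne : r ≠ 0 := by
        intro h0
        apply hgt
        rw [hgtm, h0, zero_smul]
      have hnorm : ‖g t‖ = |r| := by
        rw [hgtm, norm_smul, Real.norm_eq_abs, hm1, mul_one]
      refine ⟨|r|⁻¹ * r, ?_, m, hm1, hm2, ?_⟩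
      · rcases lt_or_gt_of_ne hrne with hlt | hgt'
        · right
          rw [abs_of_neg hlt]
          field_simp
        · left
          rw [abs_of_pos hgt']
          field_simp
      · rw [hF]
        simp only
        rw [hgtm, norm_smul, Real.norm_eq_abs, hm1, mul_one, smul_smul]
    have hFgood : ∀ t : Set.Icc t₁ t₂, g t ≠ 0 →
        ‖F t‖ = 1 ∧ Q t = Pmat s (fun i => F t i) := by
      intro t hgt
      obtain ⟨c, hc, m, hm1, hm2, hFt⟩ := hFlift t hgt
      have habs : |c| = 1 := by rcases hc with h | h <;> rw [h] <;> norm_num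
      constructor
      · rw [hFt, norm_smul, Real.norm_eq_abs, habs, hm1, mul_one]
      · rw [hFt, pmat_sign s m hc]
        exact hm2
    -- matching sign at u'
    have hgu'' : g u'' ≠ 0 := by
      apply hball'
      show |u' - (u:ℝ)| < ε
      rw [abs_lt]
      constructor <;> linarith
    have hnu'' := hngood u'' le_rfl
    have hFu'' := hFgood u'' hgu''
    have hcases : F u'' = n u'' ∨ F u'' = -(n u'') := by
      apply eq_or_neg hs hnu''.1
      rw [← hnu''.2, ← hFu''.2]
    obtain ⟨c, hc1, hc2⟩ : ∃ c : ℝ, (c = 1 ∨ c = -1) ∧ c • F u'' = n u'' := by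
      rcases hcases with h | h
      · exact ⟨1, Or.inl rfl, by rw [one_smul, h]⟩
      · exact ⟨-1, Or.inr rfl, by rw [h, smul_neg, neg_smul, one_smul, neg_neg]⟩
    -- glued function
    set n' : Set.Icc t₁ t₂ → E3 :=
      fun t => if (t:ℝ) ≤ u' then n t else c • F (clamp t) with hn'
    have hFclamp_cont : Continuous fun t => F (clamp t) := by
      have hFon : ContinuousOn F {t : Set.Icc t₁ t₂ | g t ≠ 0} := by
        apply ContinuousOn.smul (f := fun t => ‖g t‖⁻¹) (g := g)
        · exact (hgc.norm.continuousOn).inv₀ fun t htS => by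
            rw [norm_ne_zero_iff]; exact htS
        · exact hgc.continuousOn
      exact hFon.comp_continuous hclamp_cont hclamp_ball
    have hclamp_u'' : clamp u'' = u'' := by
      apply Subtype.ext
      show max u' (min u' v) = u'
      rw [min_eq_left hu'v, max_self]
    have hn'c : Continuous n' := by
      apply Continuous.if_le hnc (hFclamp_cont.const_smul c) continuous_subtype_val
        continuous_const
      intro a ha
      have haeq : a = u'' := Subtype.ext ha
      rw [haeq]; simp only [Pi.smul_apply]; rw [hclamp_u'', hc2]
    have hn'0 : n' bot = nbar := by
      rw [hn']
      simp only
      rw [if_pos (show (bot:ℝ) ≤ u' from hu'mem.1), hn0]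
    have hn'good : ∀ t : Set.Icc t₁ t₂, (t:ℝ) ≤ v →
        ‖n' t‖ = 1 ∧ Q t = Pmat s (fun i => n' t i) := by
      intro t htv
      by_cases hcase : (t:ℝ) ≤ u'
      · have : n' t = n t := if_pos hcase
        rw [this]
        exact hngood t hcase
      · push_neg at hcase
        have hclamp_t : clamp t = t := by
          apply Subtype.ext
          show max u' (min (t:ℝ) v) = (t:ℝ)
          rw [min_eq_left htv, max_eq_right hcase.le]
        have hnt : n' t = c • F t := by
          rw [hn']
          simp only
          rw [if_neg (not_le.mpr hcase), hclamp_t]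
        have hgt : g t ≠ 0 := by
          have := hclamp_ball t
          rwa [hclamp_t] at this
        have hFt := hFgood t hgt
        have habs : |c| = 1 := by rcases hc1 with h | h <;> rw [h] <;> norm_num
        constructor
        · rw [hnt, norm_smul, Real.norm_eq_abs, habs, hFt.1, mul_one]
        · rw [hnt, pmat_sign s (F t) hc1]
          exact hFt.2
    exact ⟨ε/2, by positivity, hv_mem, n', hn'c, hn'0, hn'good⟩
  -- sup argument
  set c₀ : ℝ := sSup A with hc₀
  have hc₀1 : t₁ ≤ c₀ := le_csSup hbdd hA1
  have hc₀2 : c₀ ≤ t₂ := csSup_le hAne fun x hx => hx.1.2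
  have happrox : ∀ ε > (0:ℝ), ∃ x ∈ A, c₀ - ε < x ∧ x ≤ c₀ := by
    intro ε hε
    obtain ⟨x, hxA, hxlt⟩ := exists_lt_of_lt_csSup hAne (show c₀ - ε < c₀ by linarith)
    exact ⟨x, hxA, hxlt, le_csSup hbdd hxA⟩
  obtain ⟨δ, hδ, hminA⟩ := key ⟨c₀, hc₀1, hc₀2⟩ happrox
  have hmin_le : min (c₀ + δ) t₂ ≤ c₀ := le_csSup hbdd hminA
  have hc₀t₂ : c₀ = t₂ := by
    by_contra hne
    have hlt : c₀ < t₂ := lt_of_le_of_ne hc₀2 hne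
    have : c₀ < min (c₀ + δ) t₂ := lt_min (by linarith) hlt
    linarith
  have ht₂A : t₂ ∈ A := by
    have : min (c₀ + δ) t₂ = t₂ := min_eq_right (by linarith [hc₀t₂.ge])
    rwa [this] at hminA
  obtain ⟨_, n, hnc, hn0, hngood⟩ := ht₂A
  exact ⟨n, hnc, hn0, fun t => hngood t t.2.2⟩

/-- Sign constancy: two continuous liftings agree globally up to a global sign. -/
lemma lifts_sign (s : ℝ) (hs : s ≠ 0) (t₁ t₂ : ℝ) (ht : t₁ < t₂)
    (Q : Set.Icc t₁ t₂ → Matrix (Fin 3) (Fin 3) ℝ)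
    (n m : Set.Icc t₁ t₂ → E3) (hnc : Continuous n) (hmc : Continuous m)
    (hn : ∀ t, ‖n t‖ = 1 ∧ Q t = Pmat s (fun i => n t i))
    (hm : ∀ t, ‖m t‖ = 1 ∧ Q t = Pmat s (fun i => m t i)) :
    m = n ∨ m = fun t => -n t := by
  haveI : PreconnectedSpace (Set.Icc t₁ t₂) :=
    Subtype.preconnectedSpace (isPreconnected_Icc)
  set bot : Set.Icc t₁ t₂ := ⟨t₁, Set.left_mem_Icc.mpr ht.le⟩ with hbot
  set h : Set.Icc t₁ t₂ → ℝ := fun t => (inner ℝ (n t) (m t) : ℝ) with hh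
  have hhc : Continuous h := hnc.inner hmc
  have hpm : ∀ t, (m t = n t ∧ h t = 1) ∨ (m t = -(n t) ∧ h t = -1) := by
    intro t
    have hPQ : Pmat s (fun i => n t i) = Pmat s (fun i => m t i) := by
      rw [← (hn t).2, ← (hm t).2]
    rcases eq_or_neg hs (hn t).1 hPQ with he | he
    · left
      refine ⟨he, ?_⟩
      rw [hh]
      simp only
      rw [he, real_inner_self_eq_norm_sq, (hn t).1]
      norm_num
    · right
      refine ⟨he, ?_⟩
      rw [hh]
      simp only
      rw [he, inner_neg_right, real_inner_self_eq_norm_sq, (hn t).1]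
      norm_num
  have hno : ∀ a b : Set.Icc t₁ t₂, h a = 1 → h b = -1 → False := by
    intro a b ha hb
    have hsub := intermediate_value_univ b a hhc
    have h0 : (0:ℝ) ∈ Set.Icc (h b) (h a) := by rw [ha, hb]; norm_num
    obtain ⟨t₀, ht₀⟩ := hsub h0
    rcases hpm t₀ with ⟨_, h1⟩ | ⟨_, h1⟩ <;> rw [ht₀] at h1 <;> norm_num at h1
  rcases hpm bot with ⟨_, hb1⟩ | ⟨_, hb1⟩
  · left
    funext t
    rcases hpm t with ⟨he, _⟩ | ⟨_, h1⟩
    · exact he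
    · exact (hno bot t hb1 h1).elim
  · right
    funext t
    rcases hpm t with ⟨_, h1⟩ | ⟨he, _⟩
    · exact (hno t bot h1 hb1).elim
    · exact he

theorem stmt3 (s : ℝ) (hs : s ≠ 0) (hs' : s ∈ Set.Icc (-(1 / 2) : ℝ) 1)
    (t₁ t₂ : ℝ) (ht : t₁ < t₂)
    (Q : Set.Icc t₁ t₂ → Matrix (Fin 3) (Fin 3) ℝ) (hQc : Continuous Q)
    (hQval : ∀ t, ∃ m : EuclideanSpace ℝ (Fin 3), ‖m‖ = 1 ∧ Q t = Pmat s (fun i => m i)) :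
    (∃ np : Set.Icc t₁ t₂ → EuclideanSpace ℝ (Fin 3),
      Continuous np ∧ (∀ t, ‖np t‖ = 1 ∧ Q t = Pmat s (fun i => np t i)) ∧
      (fun t => -np t) ≠ np ∧
      (∀ m : Set.Icc t₁ t₂ → EuclideanSpace ℝ (Fin 3), Continuous m →
        (∀ t, ‖m t‖ = 1 ∧ Q t = Pmat s (fun i => m t i)) →
        m = np ∨ m = fun t => -np t)) ∧
    (∀ nbar : EuclideanSpace ℝ (Fin 3), ‖nbar‖ = 1 →
      Q ⟨t₁, Set.left_mem_Icc.mpr ht.le⟩ = Pmat s (fun i => nbar i) →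
      ∃! n : Set.Icc t₁ t₂ → EuclideanSpace ℝ (Fin 3),
        Continuous n ∧ n ⟨t₁, Set.left_mem_Icc.mpr ht.le⟩ = nbar ∧
        ∀ t, ‖n t‖ = 1 ∧ Q t = Pmat s (fun i => n t i)) := by
  have hbotmem := Set.left_mem_Icc.mpr ht.le
  constructor
  · obtain ⟨m₀, hm₀1, hm₀2⟩ := hQval ⟨t₁, hbotmem⟩
    obtain ⟨np, hnpc, hnp0, hnpgood⟩ := exists_lift s hs t₁ t₂ ht Q hQc hQval m₀ hm₀1 hm₀2
    refine ⟨np, hnpc, hnpgood, ?_, ?_⟩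
    · intro heq
      have h1 := congrFun heq ⟨t₁, hbotmem⟩
      have h2 : np ⟨t₁, hbotmem⟩ = 0 := by
        have : np ⟨t₁, hbotmem⟩ + np ⟨t₁, hbotmem⟩ = 0 := by
          calc np ⟨t₁, hbotmem⟩ + np ⟨t₁, hbotmem⟩
              = np ⟨t₁, hbotmem⟩ + -np ⟨t₁, hbotmem⟩ := by rw [h1]
            _ = 0 := add_neg_cancel _
        have h3 : (2:ℝ) • np ⟨t₁, hbotmem⟩ = 0 := by rw [two_smul]; exact this
        exact (smul_eq_zero.mp h3).resolve_left (by norm_num)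
      have := (hnpgood ⟨t₁, hbotmem⟩).1
      rw [h2] at this
      simp at this
    · intro m hmc hmgood
      exact lifts_sign s hs t₁ t₂ ht Q np m hnpc hmc hnpgood hmgood
  · intro nbar hnbar hstart
    obtain ⟨n, hnc, hn0, hngood⟩ := exists_lift s hs t₁ t₂ ht Q hQc hQval nbar hnbar hstart
    refine ⟨n, ⟨hnc, hn0, hngood⟩, ?_⟩
    intro y ⟨hyc, hy0, hygood⟩
    rcases lifts_sign s hs t₁ t₂ ht Q n y hnc hyc hngood hygood with he | he
    · exact he
    · exfalso
      have h1 : y ⟨t₁, hbotmem⟩ = -(n ⟨t₁, hbotmem⟩) := congrFun he _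
      rw [hy0, hn0] at h1
      have h2 : nbar + nbar = 0 := by
        calc nbar + nbar = nbar + -nbar := by nth_rewrite 2 [h1]; rfl
          _ = 0 := add_neg_cancel _
      have h3 : (2:ℝ) • nbar = 0 := by rw [two_smul]; exact h2
      have h4 : nbar = 0 := (smul_eq_zero.mp h3).resolve_left (by norm_num)
      rw [h4] at hnbar
      simp at hnbar
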